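/- Fix r > c > 0 and for each integer n ≥ 1 let β^N(n) be the unique β ∈ (0,1) with n·β·log(β·r/c) = 1 − β. Then each CP's equilibrium surplus U(n) = (1−β^N(n))²·r/(n·β^N(n)) is a strictly decreasing function of n, and U(n) → 0 as n → ∞. -/
import Mathlib

open Real Filter

lemma aux_h_mono (r c : ℝ) (hc : 0 < c) (hr : 0 < r) {a b : ℝ}
    (ha : 0 < a) (hab : a < b) (_hb1 : b < 1)
    (hL : Real.log (b * r / c) ≤ (1 - b) / b) :
    (1 - a) * Real.log (a * r / c) < (1 - b) * Real.log (b * r / c) := by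
  have hb : 0 < b := ha.trans hab
  have hrc : 0 < r / c := by positivity
  set f : ℝ → ℝ := fun t => (1 - t) * (Real.log t + Real.log (r / c)) with hf
  have hfd : ∀ t ∈ Set.Ioo a b, HasDerivAt f
      ((-1) * (Real.log t + Real.log (r / c)) + (1 - t) * t⁻¹) t := by
    intro t ht
    have ht0 : 0 < t := ha.trans ht.1
    exact ((hasDerivAt_id t).const_sub 1).mul
      ((Real.hasDerivAt_log ht0.ne').add_const _)
  have hLb : Real.log b + Real.log (r / c) ≤ (1 - b) / b := by
    rw [← Real.log_mul hb.ne' (ne_of_gt hrc), ← mul_div_assoc]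
    exact hL
  have hmono : StrictMonoOn f (Set.Icc a b) := by
    apply strictMonoOn_of_deriv_pos (convex_Icc a b)
    · apply ContinuousOn.mul (by fun_prop)
      apply ContinuousOn.add _ continuousOn_const
      exact Real.continuousOn_log.mono (by
        intro t ht
        exact ne_of_gt (ha.trans_le ht.1))
    · intro t ht
      rw [interior_Icc] at ht
      rw [(hfd t ht).deriv]
      have ht0 : 0 < t := ha.trans ht.1
      have h1 : Real.log t < Real.log b := Real.log_lt_log ht0 ht.2
      have h2 : (1 - b) / b < (1 - t) / t := by
        rw [div_lt_div_iff₀ hb ht0]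
        nlinarith [ht.2]
      have h3 : (1 - t) * t⁻¹ = (1 - t) / t := by ring
      nlinarith
  have key := hmono (Set.left_mem_Icc.2 hab.le) (Set.right_mem_Icc.2 hab.le) hab
  have ea : f a = (1 - a) * Real.log (a * r / c) := by
    rw [hf]; simp only
    rw [← Real.log_mul ha.ne' (ne_of_gt hrc), ← mul_div_assoc]
  have eb : f b = (1 - b) * Real.log (b * r / c) := by
    rw [hf]; simp only
    rw [← Real.log_mul hb.ne' (ne_of_gt hrc), ← mul_div_assoc]
  rw [ea, eb] at key
  exact key

/-- Each CP's neutral-regime equilibrium surplus `U(n) = (1-β^N(n))² r / (n β^N(n))` is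
strictly decreasing in `n` and tends to `0` as `n → ∞`. -/
theorem stmt_13 (r c : ℝ) (hc : 0 < c) (hrc : c < r) (β : ℕ → ℝ)
    (hmem : ∀ n : ℕ, 1 ≤ n → β n ∈ Set.Ioo (0 : ℝ) 1)
    (heq : ∀ n : ℕ, 1 ≤ n → (n : ℝ) * β n * Real.log (β n * r / c) = 1 - β n) :
    (∀ m n : ℕ, 1 ≤ m → m < n →
      (1 - β n) ^ 2 * r / ((n : ℝ) * β n) < (1 - β m) ^ 2 * r / ((m : ℝ) * β m)) ∧
    Filter.Tendsto (fun n : ℕ => (1 - β n) ^ 2 * r / ((n : ℝ) * β n))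
      Filter.atTop (nhds 0) := by
  have hr : 0 < r := hc.trans hrc
  -- basic facts for n ≥ 1
  have hn1 : ∀ n : ℕ, 1 ≤ n → (1 : ℝ) ≤ (n : ℝ) := by
    intro n hn; exact_mod_cast hn
  have hpos : ∀ n : ℕ, 1 ≤ n → 0 < (n : ℝ) * β n := by
    intro n hn
    exact mul_pos (lt_of_lt_of_le one_pos (hn1 n hn)) (hmem n hn).1
  have hLpos : ∀ n : ℕ, 1 ≤ n → 0 < Real.log (β n * r / c) := by
    intro n hn
    have h1 := heq n hn
    have h2 : 0 < 1 - β n := by linarith [(hmem n hn).2]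
    nlinarith [hpos n hn, h1]
  have hcr : ∀ n : ℕ, 1 ≤ n → c / r < β n := by
    intro n hn
    have hb := (hmem n hn).1
    have h1 : (1 : ℝ) < β n * r / c := by
      have := hLpos n hn
      by_contra h
      push_neg at h
      have := Real.log_nonpos (by positivity) h
      linarith
    rw [div_lt_iff₀ hr]
    calc c = 1 * c := (one_mul c).symm
    _ < (β n * r / c) * c := by nlinarith
    _ = β n * r := by field_simp
  -- β is strictly decreasing
  have hbdec : ∀ m n : ℕ, 1 ≤ m → m < n → β n < β m := by
    intro m n hm hmn
    by_contra h
    push_neg at h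
    have hn : 1 ≤ n := hm.trans hmn.le
    have hLm := hLpos m hm
    have hbm := (hmem m hm).1
    have hLle : Real.log (β m * r / c) ≤ Real.log (β n * r / c) := by
      apply Real.log_le_log (by positivity)
      apply div_le_div_of_nonneg_right _ hc.le
      nlinarith
    have hmn' : (m : ℝ) < (n : ℝ) := by exact_mod_cast hmn
    have e1 := heq m hm
    have e2 := heq n hn
    have hb1 := (hmem m hm).1
    have hbn1 := (hmem n hn).1
    have step : (m : ℝ) * β m * Real.log (β m * r / c)
        < (n : ℝ) * β n * Real.log (β n * r / c) := by
      have hLn := hLpos n hn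
      calc (m : ℝ) * β m * Real.log (β m * r / c)
          ≤ (m : ℝ) * β n * Real.log (β n * r / c) := by
            apply mul_le_mul _ hLle hLm.le (by positivity)
            nlinarith [hn1 m hm]
        _ < (n : ℝ) * β n * Real.log (β n * r / c) := by
            apply mul_lt_mul_of_pos_right _ hLn
            exact mul_lt_mul_of_pos_right hmn' hbn1
    rw [e1, e2] at step
    linarith
  -- rewrite U(n) = r (1-βₙ) Lₙ
  have hU : ∀ n : ℕ, 1 ≤ n →
      (1 - β n) ^ 2 * r / ((n : ℝ) * β n)
        = r * ((1 - β n) * Real.log (β n * r / c)) := by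
    intro n hn
    rw [div_eq_iff (hpos n hn).ne']
    linear_combination (-(r * (1 - β n))) * heq n hn
  constructor
  · intro m n hm hmn
    have hn : 1 ≤ n := hm.trans hmn.le
    rw [hU m hm, hU n hn]
    apply mul_lt_mul_of_pos_left _ hr
    apply aux_h_mono r c hc hr (hmem n hn).1 (hbdec m n hm hmn) (hmem m hm).2
    -- log(βₘ r/c) ≤ (1-βₘ)/βₘ
    rw [le_div_iff₀ (hmem m hm).1]
    have e := heq m hm
    nlinarith [e, mul_nonneg (sub_nonneg.2 (hn1 m hm))
      (mul_nonneg (hmem m hm).1.le (hLpos m hm).le)]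
  · -- squeeze between 0 and (r*r/c)/n
    apply tendsto_of_tendsto_of_tendsto_of_le_of_le' (tendsto_const_nhds)
      (tendsto_const_div_atTop_nhds_zero_nat (r * r / c))
    · filter_upwards [eventually_ge_atTop 1] with n hn
      have := hpos n hn
      positivity
    · filter_upwards [eventually_ge_atTop 1] with n hn
      rw [div_div]
      rw [div_le_div_iff₀ (hpos n hn) (by positivity)]
      have h1 : c / r < β n := hcr n hn
      have h2 : (1 - β n) ^ 2 ≤ 1 := by
        nlinarith [(hmem n hn).1, (hmem n hn).2]
      have h3 : c < β n * r := by
        rw [div_lt_iff₀ hr] at h1; linarith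
      have h4 : (0 : ℝ) < n := lt_of_lt_of_le one_pos (hn1 n hn)
      have hb := (hmem n hn).1
      have e1 : (1 - β n) ^ 2 * (r * (c * (n : ℝ))) ≤ 1 * (r * (c * (n : ℝ))) :=
        mul_le_mul_of_nonneg_right h2 (by positivity)
      have e2 : c * (r * (n : ℝ)) < (β n * r) * (r * (n : ℝ)) :=
        mul_lt_mul_of_pos_right h3 (by positivity)
      nlinarith [e1, e2]
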